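/- The Wang–Swendsen–Kotecký algorithm at zero temperature is ergodic on every bipartite finite graph: for any integer q ≥ 2 and any finite bipartite graph G, any proper q-coloring of G can be transformed into any other proper q-coloring of G by a finite sequence of WSK moves. -/

import Mathlib

/-- `c` is a proper `q`-coloring of `G` with colors in `{1,…,q}`. -/
def ProperColoring {V : Type*} (G : SimpleGraph V) (q : ℕ) (c : V → ℕ) : Prop :=
  (∀ x, c x ∈ Finset.Icc 1 q) ∧ ∀ u v, G.Adj u v → c u ≠ c v

/-- A zero-temperature WSK move with color pair `(i,j)`: choose a set `S` which is a
union of connected components of the subgraph induced by the vertices colored `i` or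
`j` (formalized as: `S` consists of such vertices and is closed under adjacency within
them), and interchange the colors `i` and `j` on `S`. -/
def WSKPairMove {V : Type*} [DecidableEq V] (G : SimpleGraph V) (i j : ℕ) (c c' : V → ℕ) : Prop :=
  ∃ S : Finset V,
    (∀ x ∈ S, c x = i ∨ c x = j) ∧
    (∀ x ∈ S, ∀ y, G.Adj x y → (c y = i ∨ c y = j) → y ∈ S) ∧
    ∀ x, c' x = if x ∈ S then (if c x = i then j else if c x = j then i else c x) else c x

/-- A zero-temperature WSK move: a `WSKPairMove` for some pair of distinct colors
`i, j ∈ {1,…,q}`. -/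
def WSKMove {V : Type*} [DecidableEq V] (G : SimpleGraph V) (q : ℕ) (c c' : V → ℕ) : Prop :=
  ∃ i ∈ Finset.Icc 1 q, ∃ j ∈ Finset.Icc 1 q, i ≠ j ∧ WSKPairMove G i j c c'

section Aux

variable {V : Type*} [Fintype V] [DecidableEq V] (G : SimpleGraph V)

lemma wsk_pair_symm {i j : ℕ} (hij : i ≠ j) {c c' : V → ℕ}
    (h : WSKPairMove G i j c c') : WSKPairMove G i j c' c := by
  obtain ⟨S, h1, h2, h3⟩ := h
  refine ⟨S, ?_, ?_, ?_⟩
  · intro x hx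
    rcases h1 x hx with h | h <;> rw [h3 x] <;>
      simp [hx, h, hij, Ne.symm hij]
  · intro x hx y hxy hy
    by_contra hyS
    rw [h3 y, if_neg hyS] at hy
    exact hyS (h2 x hx y hxy hy)
  · intro x
    by_cases hx : x ∈ S
    · rcases h1 x hx with h | h <;> rw [h3 x] <;>
        simp [hx, h, hij, Ne.symm hij]
    · rw [h3 x]; simp [hx]

lemma wsk_move_symm (q : ℕ) : Symmetric (WSKMove G q) := by
  rintro c c' ⟨i, hi, j, hj, hij, hp⟩
  exact ⟨i, hi, j, hj, hij, wsk_pair_symm G hij hp⟩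

/-- The normalization move: set all `{1,2}`-colored vertices to the canonical
bipartition 2-coloring `c0`, in one `(1,2)` WSK move. -/
lemma nc_move (q : ℕ) (hq : 2 ≤ q) (c0 : V → ℕ)
    (hc01 : ∀ x, c0 x = 1 ∨ c0 x = 2)
    (hc0p : ∀ u v, G.Adj u v → c0 u ≠ c0 v)
    (c : V → ℕ) (hc : ProperColoring G q c) :
    WSKMove G q c (fun x => if c x = 1 ∨ c x = 2 then c0 x else c x) := by
  refine ⟨1, by simp [Finset.mem_Icc]; omega, 2, by simp [Finset.mem_Icc]; omega, by omega,
    Finset.univ.filter (fun x => (c x = 1 ∨ c x = 2) ∧ c x ≠ c0 x), ?_, ?_, ?_⟩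
  · intro x hx
    simp only [Finset.mem_filter] at hx
    exact hx.2.1
  · intro x hx y hxy hy
    simp only [Finset.mem_filter, Finset.mem_univ, true_and] at hx ⊢
    have h1 := hc.2 x y hxy
    have h2 := hc0p x y hxy
    have h3 := hc01 x
    have h4 := hc01 y
    refine ⟨hy, ?_⟩
    omega
  · intro x
    show (if c x = 1 ∨ c x = 2 then c0 x else c x) = _
    by_cases hm : (c x = 1 ∨ c x = 2) ∧ c x ≠ c0 x
    · have hxS : x ∈ Finset.univ.filter (fun x => (c x = 1 ∨ c x = 2) ∧ c x ≠ c0 x) := by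
        simp [hm]
      rw [if_pos hm.1, if_pos hxS]
      have h3 := hc01 x
      rcases hm.1 with h | h <;> simp [h] <;> omega
    · have hxS : x ∉ Finset.univ.filter (fun x => (c x = 1 ∨ c x = 2) ∧ c x ≠ c0 x) := by
        simp only [Finset.mem_filter, Finset.mem_univ, true_and]
        exact hm
      rw [if_neg hxS]
      by_cases hP : c x = 1 ∨ c x = 2
      · rw [if_pos hP]
        have : c x = c0 x := by
          by_contra hne
          exact hm ⟨hP, hne⟩
        omega
      · rw [if_neg hP]

lemma nc_proper (q : ℕ) (hq : 2 ≤ q) (c0 : V → ℕ)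
    (hc01 : ∀ x, c0 x = 1 ∨ c0 x = 2)
    (hc0p : ∀ u v, G.Adj u v → c0 u ≠ c0 v)
    (c : V → ℕ) (hc : ProperColoring G q c) :
    ProperColoring G q (fun x => if c x = 1 ∨ c x = 2 then c0 x else c x) := by
  constructor
  · intro x
    by_cases hP : c x = 1 ∨ c x = 2
    · simp only [if_pos hP, Finset.mem_Icc]
      have := hc01 x
      omega
    · simpa only [if_neg hP] using hc.1 x
  · intro u v huv
    have h1 := hc.2 u v huv
    have h2 := hc0p u v huv
    have h3 := hc01 u
    have h4 := hc01 v
    by_cases hu : c u = 1 ∨ c u = 2 <;> by_cases hv : c v = 1 ∨ c v = 2 <;>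
      simp only [if_pos, if_neg, hu, hv, if_true, if_false] <;> omega

/-- The elimination move: if all `{1,2}`-colored vertices already agree with `c0`,
a single vertex of other color can be recolored to `c0 v` by a singleton WSK move. -/
lemma elim_move (q : ℕ) (hq : 2 ≤ q) (c0 : V → ℕ)
    (hc01 : ∀ x, c0 x = 1 ∨ c0 x = 2)
    (hc0p : ∀ u v, G.Adj u v → c0 u ≠ c0 v)
    (c : V → ℕ) (hc : ProperColoring G q c)
    (H : ∀ x, (c x = 1 ∨ c x = 2) → c x = c0 x)
    (v : V) (hv : ¬(c v = 1 ∨ c v = 2)) :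
    WSKMove G q c (Function.update c v (c0 v)) ∧
      ProperColoring G q (Function.update c v (c0 v)) := by
  have hnb : ∀ y, G.Adj v y → c y ≠ c v ∧ c y ≠ c0 v := by
    intro y hy
    refine ⟨fun he => hc.2 v y hy he.symm, ?_⟩
    by_cases hP : c y = 1 ∨ c y = 2
    · rw [H y hP]
      exact fun he => hc0p v y hy he.symm
    · have := hc01 v
      omega
  constructor
  · refine ⟨c v, hc.1 v, c0 v, by simp only [Finset.mem_Icc]; have := hc01 v; omega,
      by have := hc01 v; omega, {v}, ?_, ?_, ?_⟩
    · intro x hx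
      rw [Finset.mem_singleton] at hx
      subst hx
      exact Or.inl rfl
    · intro x hx y hxy hy
      rw [Finset.mem_singleton] at hx
      subst hx
      exfalso
      obtain ⟨h1, h2⟩ := hnb y hxy
      tauto
    · intro x
      by_cases hx : x = v
      · subst hx
        simp [Function.update_self]
      · simp [Function.update_of_ne hx, hx]
  · constructor
    · intro x
      by_cases hx : x = v
      · subst hx
        simp only [Function.update_self, Finset.mem_Icc]
        have := hc01 x
        omega
      · rw [Function.update_of_ne hx]
        exact hc.1 x
    · intro u w huw
      by_cases hu : u = v <;> by_cases hw : w = v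
      · subst hu; subst hw; exact absurd huw (G.irrefl)
      · subst hu
        rw [Function.update_self, Function.update_of_ne hw]
        exact fun h => (hnb w huw).2 h.symm
      · subst hw
        rw [Function.update_self, Function.update_of_ne hu]
        exact (hnb u huw.symm).2
      · rw [Function.update_of_ne hu, Function.update_of_ne hw]
        exact hc.2 u w huw

lemma to_canonical (q : ℕ) (hq : 2 ≤ q) (c0 : V → ℕ)
    (hc01 : ∀ x, c0 x = 1 ∨ c0 x = 2)
    (hc0p : ∀ u v, G.Adj u v → c0 u ≠ c0 v) :
    ∀ n (c : V → ℕ), ProperColoring G q c →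
      (Finset.univ.filter (fun x => ¬(c x = 1 ∨ c x = 2))).card ≤ n →
      Relation.ReflTransGen (WSKMove G q) c c0 := by
  intro n
  induction n with
  | zero =>
    intro c hc hcard
    have hall : ∀ x, c x = 1 ∨ c x = 2 := by
      intro x
      by_contra hx
      have hmem : x ∈ Finset.univ.filter (fun x => ¬(c x = 1 ∨ c x = 2)) :=
        Finset.mem_filter.2 ⟨Finset.mem_univ x, hx⟩
      have := Finset.card_pos.2 ⟨x, hmem⟩
      omega
    have h := nc_move G q hq c0 hc01 hc0p c hc
    have heq : (fun x => if c x = 1 ∨ c x = 2 then c0 x else c x) = c0 := by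
      funext x
      rw [if_pos (hall x)]
    rw [heq] at h
    exact Relation.ReflTransGen.single h
  | succ n ih =>
    intro c hc hcard
    rcases Finset.eq_empty_or_nonempty
        (Finset.univ.filter (fun x => ¬(c x = 1 ∨ c x = 2))) with hemp | ⟨v, hvmem⟩
    · exact ih c hc (by rw [hemp]; simp)
    · have hv : ¬(c v = 1 ∨ c v = 2) := by
        simpa using (Finset.mem_filter.1 hvmem).2
      have m1 : WSKMove G q c (fun x => if c x = 1 ∨ c x = 2 then c0 x else c x) :=
        nc_move G q hq c0 hc01 hc0p c hc
      have hc1 : ProperColoring G q (fun x => if c x = 1 ∨ c x = 2 then c0 x else c x) :=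
        nc_proper G q hq c0 hc01 hc0p c hc
      set c1 : V → ℕ := fun x => if c x = 1 ∨ c x = 2 then c0 x else c x with hc1def
      have H1 : ∀ x, (c1 x = 1 ∨ c1 x = 2) → c1 x = c0 x := by
        intro x hx
        by_cases hP : c x = 1 ∨ c x = 2
        · simp [hc1def, hP]
        · rw [hc1def] at hx ⊢
          simp only [if_neg hP] at hx ⊢
          exact absurd hx hP
      have hv1 : ¬(c1 v = 1 ∨ c1 v = 2) := by
        rw [hc1def]
        simpa only [if_neg hv] using hv
      obtain ⟨m2, hc2⟩ := elim_move G q hq c0 hc01 hc0p c1 hc1 H1 v hv1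
      have hsub : Finset.univ.filter
            (fun x => ¬(Function.update c1 v (c0 v) x = 1 ∨ Function.update c1 v (c0 v) x = 2))
          ⊆ (Finset.univ.filter (fun x => ¬(c x = 1 ∨ c x = 2))).erase v := by
        intro x hx
        simp only [Finset.mem_filter, Finset.mem_univ, true_and] at hx
        have hxv : x ≠ v := by
          intro h
          subst h
          rw [Function.update_self] at hx
          exact hx (hc01 x)
        rw [Function.update_of_ne hxv] at hx
        rw [Finset.mem_erase]
        refine ⟨hxv, ?_⟩
        simp only [Finset.mem_filter, Finset.mem_univ, true_and]
        intro hP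
        rw [hc1def] at hx
        simp only [if_pos hP] at hx
        exact hx (hc01 x)
      have hcard2 : (Finset.univ.filter
          (fun x => ¬(Function.update c1 v (c0 v) x = 1 ∨ Function.update c1 v (c0 v) x = 2))).card ≤ n := by
        have h1 := Finset.card_le_card hsub
        rw [Finset.card_erase_of_mem hvmem] at h1
        have h2 := Finset.card_pos.2 ⟨v, hvmem⟩
        omega
      exact Relation.ReflTransGen.head m1
        (Relation.ReflTransGen.head m2 (ih _ hc2 hcard2))

end Aux

/-- the Wang–Swendsen–Kotecký algorithm at zero temperature is ergodic
on every finite bipartite graph: for `q ≥ 2`, any proper `q`-coloring can be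
transformed into any other by a finite sequence of WSK moves. -/
theorem wsk_ergodic_on_bipartite
    {V : Type*} [Fintype V] [DecidableEq V] (G : SimpleGraph V) (hbip : G.Colorable 2)
    (q : ℕ) (hq : 2 ≤ q) (σ σ' : V → ℕ)
    (hσ : ProperColoring G q σ) (hσ' : ProperColoring G q σ') :
    Relation.ReflTransGen (WSKMove G q) σ σ' := by
  obtain ⟨C⟩ := hbip
  set c0 : V → ℕ := fun v => if C v = 0 then 1 else 2 with hc0
  have hc01 : ∀ x, c0 x = 1 ∨ c0 x = 2 := by
    intro x
    by_cases h : C x = 0 <;> simp [hc0, h]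
  have hfin2 : ∀ a : Fin 2, a = 0 ∨ a = 1 := by decide
  have hc0p : ∀ u v, G.Adj u v → c0 u ≠ c0 v := by
    intro u v h
    have hne := C.valid h
    by_cases h0 : C u = 0 <;> by_cases h1 : C v = 0 <;> simp only [hc0, h0, h1, if_true, if_false]
    · exact absurd (h0.trans h1.symm) hne
    · omega
    · omega
    · have hu1 : C u = 1 := (hfin2 (C u)).resolve_left h0
      have hv1 : C v = 1 := (hfin2 (C v)).resolve_left h1
      exact absurd (hu1.trans hv1.symm) hne
  have h1 : Relation.ReflTransGen (WSKMove G q) σ c0 :=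
    to_canonical G q hq c0 hc01 hc0p _ σ hσ le_rfl
  have h2 : Relation.ReflTransGen (WSKMove G q) σ' c0 :=
    to_canonical G q hq c0 hc01 hc0p _ σ' hσ' le_rfl
  have hsym : Symmetric (Relation.ReflTransGen (WSKMove G q)) :=
    by haveI : Std.Symm (WSKMove G q) := ⟨wsk_move_symm G q⟩; exact fun a b h => Std.Symm.symm a b h
  exact h1.trans (hsym h2)
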